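/- A node first obtains path information exactly at iteration dist(s,o): for every vertex o reachable from s, the generalized Bellman–Ford iterate at iteration t = dist(s,o) equals the sum of the weights of all shortest walks from s to o, i.e., x⁽ᵈⁱˢᵗ⁽ˢ'ᵒ⁾⁾(o) = ∑_{p ∈ P_{dist(s,o)}(s,o)} weight(p), where P_ℓ(s,o) is the set of walks of length ℓ from s to o in G. -/

import Mathlib

open Finset

/-- The weight of a walk: the product of the edge weights `wt v_{i-1} v_i` along the
walk, with the length-0 walk having weight 1. -/
def SimpleGraph.Walk.weight {V : Type*} {G : SimpleGraph V} {R : Type*} [CommSemiring R]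
    (wt : V → V → R) {u v : V} (p : G.Walk u v) : R :=
  (p.darts.map fun d => wt d.fst d.snd).prod

/-- `pathSum G wt t s o = ∑_{p ∈ P_t(s,o)} weight(p)`, the sum of the weights of all
walks of length `t` from `s` to `o` in `G`. -/
def pathSum {V : Type*} [Fintype V] [DecidableEq V] (G : SimpleGraph V) [DecidableRel G.Adj]
    {R : Type*} [CommSemiring R] (wt : V → V → R) (t : ℕ) (s o : V) : R :=
  ∑ p ∈ G.finsetWalkLength t s o, p.weight wt

/-- The generalized Bellman–Ford iterates `x⁽ᵗ⁾` with source `s`: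
`x⁽⁰⁾(o) = 1` if `o = s` and `0` otherwise, and
`x⁽ᵗ⁾(o) = (∑_{u adjacent to o} x⁽ᵗ⁻¹⁾(u) * wt u o) + x⁽⁰⁾(o)` for `t ≥ 1`. -/
def genBF {V : Type*} [Fintype V] [DecidableEq V] (G : SimpleGraph V) [DecidableRel G.Adj]
    {R : Type*} [CommSemiring R] (wt : V → V → R) (s : V) : ℕ → V → R
  | 0 => fun o => if o = s then 1 else 0
  | (t + 1) => fun o =>
      (∑ u ∈ G.neighborFinset o, genBF G wt s t u * wt u o) + (if o = s then 1 else 0)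

open Finset SimpleGraph

lemma weight_reverse {V : Type*} {G : SimpleGraph V} {R : Type*} [CommSemiring R]
    (wt : V → V → R) {u v : V} (p : G.Walk u v) :
    p.reverse.weight wt = p.weight (fun a b => wt b a) := by
  simp [SimpleGraph.Walk.weight, SimpleGraph.Walk.darts_reverse, List.map_reverse,
    List.prod_reverse, List.map_map, Function.comp_def]

lemma pathSum_reverse {V : Type*} [Fintype V] [DecidableEq V] (G : SimpleGraph V)
    [DecidableRel G.Adj] {R : Type*} [CommSemiring R] (wt : V → V → R) (n : ℕ) (s o : V) :
    pathSum G wt n s o = ∑ p ∈ G.finsetWalkLength n o s, p.weight (fun a b => wt b a) := by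
  unfold pathSum
  refine Finset.sum_nbij' (fun p => p.reverse) (fun p => p.reverse) ?_ ?_ ?_ ?_ ?_ <;>
    simp [SimpleGraph.mem_finsetWalkLength_iff, weight_reverse]
lemma pathSum_succ {V : Type*} [Fintype V] [DecidableEq V] (G : SimpleGraph V)
    [DecidableRel G.Adj] {R : Type*} [CommSemiring R] (wt : V → V → R) (n : ℕ) (s o : V) :
    pathSum G wt (n + 1) s o = ∑ u ∈ G.neighborFinset o, pathSum G wt n s u * wt u o := by
  rw [pathSum_reverse]
  show ∑ p ∈ G.finsetWalkLength (n+1) o s, _ = _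
  rw [SimpleGraph.finsetWalkLength, Finset.sum_biUnion, SimpleGraph.neighborFinset_def,
    ← Finset.sum_set_coe]
  · refine Finset.sum_congr rfl fun w _ => ?_
    rw [Finset.sum_map, pathSum_reverse, Finset.sum_mul]
    refine Finset.sum_congr rfl fun q hq => ?_
    have hw : G.Adj o w := w.2
    change (Walk.cons hw q).weight (fun a b => wt b a) = _
    rw [SimpleGraph.Walk.weight, SimpleGraph.Walk.darts_cons]
    simp [SimpleGraph.Walk.weight, mul_comm]
  · intro a _ b _ hab
    simp only [Finset.disjoint_left, Finset.mem_map, Function.Embedding.coeFn_mk]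
    rintro p ⟨q, _, rfl⟩ ⟨r, _, hr⟩
    exact hab (Subtype.ext (by injection hr.symm))
lemma pathSum_zero {V : Type*} [Fintype V] [DecidableEq V] (G : SimpleGraph V)
    [DecidableRel G.Adj] {R : Type*} [CommSemiring R] (wt : V → V → R) (s o : V) :
    pathSum G wt 0 s o = if o = s then 1 else 0 := by
  unfold pathSum
  rw [SimpleGraph.finsetWalkLength]
  rcases eq_or_ne o s with rfl | h
  · simp [SimpleGraph.Walk.weight]
  · simp [Ne.symm h, h]

lemma genBF_eq {V : Type*} [Fintype V] [DecidableEq V] (G : SimpleGraph V)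
    [DecidableRel G.Adj] {R : Type*} [CommSemiring R] (wt : V → V → R) (s : V) (t : ℕ) (o : V) :
    genBF G wt s t o = ∑ k ∈ Finset.range (t + 1), pathSum G wt k s o := by
  induction t generalizing o with
  | zero => simp [genBF, pathSum_zero]
  | succ t ih =>
    rw [genBF]
    simp only [ih]
    rw [Finset.sum_range_succ' _ (t + 1), pathSum_zero]
    congr 1
    simp only [Finset.sum_mul, pathSum_succ]
    exact Finset.sum_comm
/-- A node first obtains path information exactly at iteration
`dist(s,o)`: for every vertex `o` reachable from `s`, the generalized Bellman–Ford
iterate at iteration `t = dist(s,o)` equals the sum of the weights of all shortest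
walks from `s` to `o`: `x⁽ᵈⁱˢᵗ⁽ˢ,ᵒ⁾⁾(o) = ∑_{p ∈ P_{dist(s,o)}(s,o)} weight(p)`. -/
theorem genBF_at_dist_eq_shortest_pathSum {V : Type*} [Fintype V] [DecidableEq V]
    (G : SimpleGraph V) [DecidableRel G.Adj] {R : Type*} [CommSemiring R]
    (wt : V → V → R) (s : V) (o : V) (h : G.Reachable s o) :
    genBF G wt s (G.dist s o) o = pathSum G wt (G.dist s o) s o := by
  rw [genBF_eq, Finset.sum_range_succ]
  have hz : ∀ k ∈ Finset.range (G.dist s o), pathSum G wt k s o = 0 := by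
    intro k hk
    rw [Finset.mem_range] at hk
    refine Finset.sum_eq_zero fun p hp => ?_
    have hl := SimpleGraph.mem_finsetWalkLength_iff.mp hp
    exact absurd (hl ▸ SimpleGraph.dist_le p) (by omega)
  rw [Finset.sum_eq_zero hz, zero_add]
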